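/- Let A₁, A₂, B₁, B₂ be finite types. Let μ : Matrix ((A₂ × B₂) × (A₁ × B₁)) ((A₂ × B₂) × (A₁ × B₁)) ℂ be separable across the A:B split, i.e., there exist a finite index type ι, nonnegative reals p : ι → ℝ, positive semidefinite matrices X : ι → Matrix (A₂ × A₁) (A₂ × A₁) ℂ and Y : ι → Matrix (B₂ × B₁) (B₂ × B₁) ℂ such that for all indices, μ ((a₂,b₂),(a₁,b₁)) ((a₂',b₂'),(a₁',b₁')) = ∑ j, (p j : ℂ) * X j (a₂,a₁) (a₂',a₁') * Y j (b₂,b₁) (b₂',b₁'). Let ρ : Matrix (A₁ × B₁) (A₁ × B₁) ℂ be separable: there exist a finite index type κ, nonnegative reals q : κ → ℝ, and positive semidefinite R : κ → Matrix A₁ A₁ ℂ, S : κ → Matrix B₁ B₁ ℂ with ρ = ∑ k, (q k : ℂ) • (R k ⊗ₖ S k). Then the link product μ ⋆ ρ : Matrix (A₂ × B₂) (A₂ × B₂) ℂ is separable: there exist a finite index type ι', nonnegative reals r : ι' → ℝ, and positive semidefinite matrices P : ι' → Matrix A₂ A₂ ℂ, Q : ι' → Matrix B₂ B₂ ℂ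 such that μ ⋆ ρ = ∑ l, (r l : ℂ) • (P l ⊗ₖ Q l). (Separable states are closed under the link product; this makes the resource theory of separable entanglement Choi-defined.) -/

import Mathlib

open Matrix Kronecker BigOperators
open scoped ComplexOrder

/-- Link product of a bipartite matrix with a state. -/
noncomputable def linkState {S T : Type*} [Fintype T] (N : Matrix (S × T) (S × T) ℂ)
    (ρ : Matrix T T ℂ) : Matrix S S ℂ :=
  Matrix.of fun s s' => ∑ t, ∑ t', N (s, t) (s', t') * ρ t t'

lemma sum4_comm {α β γ δ M : Type*} [Fintype α] [Fintype β] [Fintype γ] [Fintype δ]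
    [AddCommMonoid M] (f : α → β → γ → δ → M) :
    ∑ a, ∑ b, ∑ c, ∑ d, f a b c d = ∑ c, ∑ d, ∑ a, ∑ b, f a b c d := by
  have := Fintype.sum_equiv (Equiv.prodComm (α × β) (γ × δ))
    (fun x => f x.1.1 x.1.2 x.2.1 x.2.2) (fun y => f y.2.1 y.2.2 y.1.1 y.1.2) (fun x => rfl)
  simpa [Fintype.sum_prod_type] using this

open scoped MatrixOrder in
lemma posSemidef_exists_eq_conjTranspose_mul_self' {n : Type*} [Fintype n]
    {M : Matrix n n ℂ} (hM : M.PosSemidef) : ∃ B : Matrix n n ℂ, M = Bᴴ * B := by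
  classical
  have h0 : 0 ≤ M := Matrix.nonneg_iff_posSemidef.mpr hM
  refine ⟨CFC.sqrt M, ?_⟩
  have := CFC.sqrt_mul_sqrt_self M h0
  rw [show (CFC.sqrt M)ᴴ = CFC.sqrt M from (CFC.sqrt_nonneg M).isSelfAdjoint, this]

lemma linkState_posSemidef {S T : Type*} [Fintype S] [Fintype T]
    (M : Matrix (S × T) (S × T) ℂ) (ρ : Matrix T T ℂ)
    (hM : M.PosSemidef) (hρ : ρ.PosSemidef) : (linkState M ρ).PosSemidef := by
  obtain ⟨B, hB⟩ := posSemidef_exists_eq_conjTranspose_mul_self' hM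
  obtain ⟨C, hC⟩ := posSemidef_exists_eq_conjTranspose_mul_self' hρ
  have h : linkState M ρ =
      (Matrix.of fun (cd : (S × T) × T) (s : S) => ∑ t, B cd.1 (s, t) * C cd.2 t)ᴴ *
      (Matrix.of fun (cd : (S × T) × T) (s : S) => ∑ t, B cd.1 (s, t) * C cd.2 t) := by
    ext s s'
    simp only [linkState, hB, hC, Matrix.mul_apply, Matrix.conjTranspose_apply,
      Matrix.of_apply, star_sum, star_mul', Finset.sum_mul, Finset.mul_sum]
    rw [Fintype.sum_prod_type]
    rw [sum4_comm]
    conv_rhs => rw [Finset.sum_comm]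
    refine Finset.sum_congr rfl fun d _ => Finset.sum_congr rfl fun c _ => ?_
    rw [Finset.sum_comm]
    exact Finset.sum_congr rfl fun t' _ => Finset.sum_congr rfl fun t _ => by ring
  rw [h]
  exact Matrix.posSemidef_conjTranspose_mul_self _

theorem stmt11 {A₁ A₂ B₁ B₂ : Type*} [Fintype A₁] [Fintype A₂] [Fintype B₁] [Fintype B₂]
    (μ : Matrix ((A₂ × B₂) × (A₁ × B₁)) ((A₂ × B₂) × (A₁ × B₁)) ℂ)
    (ι : Type) [Fintype ι] (p : ι → ℝ) (hp : ∀ j, 0 ≤ p j)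
    (X : ι → Matrix (A₂ × A₁) (A₂ × A₁) ℂ) (hX : ∀ j, (X j).PosSemidef)
    (Y : ι → Matrix (B₂ × B₁) (B₂ × B₁) ℂ) (hY : ∀ j, (Y j).PosSemidef)
    (hμ : ∀ (a₂ : A₂) (b₂ : B₂) (a₁ : A₁) (b₁ : B₁)
        (a₂' : A₂) (b₂' : B₂) (a₁' : A₁) (b₁' : B₁),
      μ ((a₂, b₂), (a₁, b₁)) ((a₂', b₂'), (a₁', b₁')) =
        ∑ j, (p j : ℂ) * X j (a₂, a₁) (a₂', a₁') * Y j (b₂, b₁) (b₂', b₁'))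
    (ρ : Matrix (A₁ × B₁) (A₁ × B₁) ℂ)
    (κ : Type) [Fintype κ] (q : κ → ℝ) (hq : ∀ k, 0 ≤ q k)
    (R : κ → Matrix A₁ A₁ ℂ) (hR : ∀ k, (R k).PosSemidef)
    (S : κ → Matrix B₁ B₁ ℂ) (hS : ∀ k, (S k).PosSemidef)
    (hρ : ρ = ∑ k, (q k : ℂ) • (R k ⊗ₖ S k)) :
    ∃ (n : ℕ) (r : Fin n → ℝ) (P : Fin n → Matrix A₂ A₂ ℂ) (Q : Fin n → Matrix B₂ B₂ ℂ),
      (∀ l, 0 ≤ r l) ∧ (∀ l, (P l).PosSemidef) ∧ (∀ l, (Q l).PosSemidef) ∧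
        linkState μ ρ = ∑ l, (r l : ℂ) • (P l ⊗ₖ Q l) := by
  have key : linkState μ ρ = ∑ j, ∑ k, ((p j * q k : ℝ) : ℂ) •
      (linkState (X j) (R k) ⊗ₖ linkState (Y j) (S k)) := by
    ext ⟨a₂, b₂⟩ ⟨a₂', b₂'⟩
    rw [hρ]
    simp only [linkState, Matrix.of_apply, Matrix.sum_apply, Matrix.smul_apply,
      Matrix.kroneckerMap_apply, smul_eq_mul, hμ, Finset.sum_mul, Finset.mul_sum]
    rw [sum4_comm]
    conv_rhs => rw [Finset.sum_comm]
    refine Finset.sum_congr rfl fun k _ => Finset.sum_congr rfl fun j _ => ?_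
    simp only [Fintype.sum_prod_type]
    conv_lhs => enter [2, a₁]; rw [Finset.sum_comm]
    rw [sum4_comm]
    refine Finset.sum_congr rfl fun b₁ _ => Finset.sum_congr rfl fun b₁' _ =>
      Finset.sum_congr rfl fun a₁ _ => Finset.sum_congr rfl fun a₁' _ => by push_cast; ring
  set e := (Fintype.equivFin (ι × κ)).symm with he
  refine ⟨Fintype.card (ι × κ), fun l => p (e l).1 * q (e l).2,
    fun l => linkState (X (e l).1) (R (e l).2),
    fun l => linkState (Y (e l).1) (S (e l).2),
    fun l => mul_nonneg (hp _) (hq _),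
    fun l => linkState_posSemidef _ _ (hX _) (hR _),
    fun l => linkState_posSemidef _ _ (hY _) (hS _), ?_⟩
  rw [key]
  calc ∑ j, ∑ k, ((p j * q k : ℝ) : ℂ) •
        (linkState (X j) (R k) ⊗ₖ linkState (Y j) (S k))
      = ∑ jk : ι × κ, ((p jk.1 * q jk.2 : ℝ) : ℂ) •
        (linkState (X jk.1) (R jk.2) ⊗ₖ linkState (Y jk.1) (S jk.2)) :=
        (Fintype.sum_prod_type (f := fun jk : ι × κ => ((p jk.1 * q jk.2 : ℝ) : ℂ) •
          (linkState (X jk.1) (R jk.2) ⊗ₖ linkState (Y jk.1) (S jk.2)))).symm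
    _ = ∑ l, ((p (e l).1 * q (e l).2 : ℝ) : ℂ) •
        (linkState (X (e l).1) (R (e l).2) ⊗ₖ linkState (Y (e l).1) (S (e l).2)) :=
        (Fintype.sum_equiv e _ _ fun l => rfl).symm
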